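/- Let q = p^n be a prime power, k a positive divisor of q-1, and m = (q-1)/k. Then det[C(ki+kj, ki)]_{1≤i,j≤m-1} ≡ (-1)^{((k+1)m^2-(k-1)m-2)/2} (mod p), where C denotes the binomial coefficient. -/

import Mathlib

lemma aux_dvd_choose (p nn a b : ℕ) (hp : p.Prime) (hn : 0 < nn)
    (ha : a < p ^ nn) (hb : b < p ^ nn) (hab : p ^ nn ≤ a + b) :
    p ∣ (a + b).choose a := by
  have hlog : Nat.log p (a + b) < nn + 1 := by
    apply Nat.log_lt_of_lt_pow (by omega)
    calc a + b < p ^ nn + p ^ nn := by omega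
      _ ≤ p ^ nn * p := by
          have := hp.two_le
          nlinarith [Nat.pos_of_ne_zero (fun h => by simp [h] at ha : p ^ nn ≠ 0)]
      _ = p ^ (nn + 1) := by rw [pow_succ]
  have hK := Nat.Prime.emultiplicity_choose hp (Nat.le_add_right a b) hlog
  have hmem : nn ∈ Finset.filter
      (fun i => p ^ i ≤ a % p ^ i + (a + b - a) % p ^ i) (Finset.Ico 1 (nn + 1)) := by
    rw [Finset.mem_filter, Finset.mem_Ico]
    refine ⟨⟨hn, by omega⟩, ?_⟩
    rw [Nat.add_sub_cancel_left, Nat.mod_eq_of_lt ha, Nat.mod_eq_of_lt hb]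
    exact hab
  apply emultiplicity_ne_zero.mp
  rw [hK]
  exact_mod_cast Nat.cast_ne_zero.mpr (Finset.card_ne_zero_of_mem hmem)

lemma aux_choose_pred (p nn : ℕ) (hp : p.Prime) [NeZero p] :
    ∀ r : ℕ, r ≤ p ^ nn - 1 → (((p ^ nn - 1).choose r : ℕ) : ZMod p) = (-1) ^ r := by
  intro r
  induction r with
  | zero => intro _; simp
  | succ r ih =>
    intro hr
    have hq1 : 1 ≤ p ^ nn := Nat.one_le_pow _ _ hp.pos
    have hps : p ∣ (p ^ nn).choose (r + 1) :=
      Nat.Prime.dvd_choose_pow hp (by omega) (by omega)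
    have hpas : (p ^ nn).choose (r + 1) =
        (p ^ nn - 1).choose r + (p ^ nn - 1).choose (r + 1) := by
      have h1 : p ^ nn = (p ^ nn - 1) + 1 := by omega
      conv_lhs => rw [h1]
      exact Nat.choose_succ_succ _ _
    have h0 : (((p ^ nn).choose (r + 1) : ℕ) : ZMod p) = 0 :=
      (ZMod.natCast_eq_zero_iff _ _).mpr hps
    rw [hpas] at h0
    push_cast at h0
    rw [ih (by omega)] at h0
    linear_combination h0

lemma aux_det_antidiag {R : Type*} [CommRing R] :
    ∀ (N : ℕ) (A : Matrix (Fin N) (Fin N) R),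
      (∀ i j : Fin N, N ≤ (i : ℕ) + (j : ℕ) → A i j = 0) →
      A.det = (-1 : R) ^ (N * (N - 1) / 2) * ∏ i : Fin N, A i i.rev := by
  intro N
  induction N with
  | zero => intro A _; simp
  | succ N ih =>
    intro A h
    rw [Matrix.det_succ_row A (Fin.last N)]
    have hs := Finset.sum_eq_single (s := (Finset.univ : Finset (Fin (N + 1))))
      (f := fun j => (-1 : R) ^ ((Fin.last N : ℕ) + (j : ℕ)) * A (Fin.last N) j *
        (A.submatrix (Fin.last N).succAbove j.succAbove).det)
      (0 : Fin (N + 1))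
      (fun j _ hj => by
        have hjv : (j : ℕ) ≠ 0 := fun h0 => hj (Fin.ext (by simp [h0]))
        have hz : A (Fin.last N) j = 0 := h _ _ (by simp only [Fin.val_last]; omega)
        simp only [hz, mul_zero, zero_mul])
      (fun habs => absurd (Finset.mem_univ _) habs)
    rw [hs]
    simp only [Fin.succAbove_last, Fin.succAbove_zero, Fin.val_last, Fin.val_zero,
      add_zero, Nat.add_sub_cancel]
    rw [ih (A.submatrix Fin.castSucc Fin.succ) (fun i j hij => h _ _ (by
      simp only [Fin.coe_castSucc, Fin.val_succ]; omega))]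
    rw [Fin.prod_univ_castSucc (f := fun i : Fin (N + 1) => A i i.rev)]
    simp only [Matrix.submatrix_apply, Fin.rev_last, Fin.rev_castSucc]
    have hexp : (N + 1) * N / 2 = N + N * (N - 1) / 2 := by
      have b1 : (N + 1) * N = 2 * N + N * (N - 1) := by
        cases N with
        | zero => simp
        | succ n =>
          have hsn : n + 1 - 1 = n := by omega
          rw [hsn]; ring
      omega
    rw [hexp, pow_add]
    ring

lemma aux_exp (k m : ℕ) (hk : 1 ≤ k) (hm : 1 ≤ m) :
    ((k + 1) * m ^ 2 - (k - 1) * m - 2) / 2 =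
      (m - 1) * (m - 2) / 2 + k * (m * (m - 1) / 2) + 2 * (m - 1) := by
  obtain ⟨K, rfl⟩ : ∃ K, k = K + 1 := ⟨k - 1, by omega⟩
  obtain ⟨M, rfl⟩ : ∃ M, m = M + 1 := ⟨m - 1, by omega⟩
  simp only [Nat.add_sub_cancel]
  cases M with
  | zero => simp; omega
  | succ M' =>
    have h2 : M' + 1 + 1 - 2 = M' := by omega
    rw [h2]
    rw [show (M' + 1 + 1 : ℕ) ^ 2 = (M' + 1 + 1) * (M' + 1 + 1) from pow_two _]
    obtain ⟨T, hT⟩ : ∃ T, (M' + 1 + 1) * (M' + 1) = T + T := by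
      obtain ⟨T, hT⟩ := Nat.even_mul_succ_self (M' + 1)
      exact ⟨T, by rw [← hT]; ring⟩
    obtain ⟨S, hS⟩ : ∃ S, (M' + 1) * M' = S + S := by
      obtain ⟨S, hS⟩ := Nat.even_mul_succ_self M'
      exact ⟨S, by rw [← hS]; ring⟩
    have hNum : (K + 1 + 1) * ((M' + 1 + 1) * (M' + 1 + 1)) - K * (M' + 1 + 1) - 2
        = (S + S) + (K * T + K * T) + (T + T) + 4 * (M' + 1) := by
      have e1 : (K + 1 + 1) * ((M' + 1 + 1) * (M' + 1 + 1)) =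
          K * (M' + 1 + 1) + 2 +
          ((M' + 1) * M' + K * ((M' + 1 + 1) * (M' + 1)) + (M' + 1 + 1) * (M' + 1)
              + 4 * (M' + 1)) := by
        ring
      have eKT : K * ((M' + 1 + 1) * (M' + 1)) = K * T + K * T := by
        rw [hT]; ring
      omega
    rw [hNum]
    rw [show (M' + 1) * M' / 2 = S from by omega,
        show (M' + 1 + 1) * (M' + 1) / 2 = T from by omega]
    have a5 : (K + 1) * T = K * T + T := by ring
    omega

theorem stmt13 (p n q k m : ℕ) (hp : p.Prime) (hn : 0 < n) (hq : q = p ^ n)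
    (hk0 : 0 < k) (hk : k ∣ q - 1) (hm : m = (q - 1) / k) :
    Matrix.det (Matrix.of fun i j : Fin (m - 1) =>
        ((k * ((i : ℕ) + 1) + k * ((j : ℕ) + 1)).choose (k * ((i : ℕ) + 1)) : ℤ))
      ≡ (-1) ^ (((k + 1) * m ^ 2 - (k - 1) * m - 2) / 2) [ZMOD (p : ℤ)] := by
  haveI : NeZero p := ⟨hp.pos.ne'⟩
  have hq1 : 1 < q := by rw [hq]; exact Nat.one_lt_pow hn.ne' hp.one_lt
  have hkm : k * m = q - 1 := by rw [hm]; exact Nat.mul_div_cancel' hk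
  have hm1 : 1 ≤ m := by
    rw [hm]
    exact (Nat.one_le_div_iff hk0).mpr (Nat.le_of_dvd (by omega) hk)
  -- move to ZMod p
  rw [← ZMod.intCast_eq_intCast_iff]
  push_cast
  set X : Matrix (Fin (m - 1)) (Fin (m - 1)) ℤ := Matrix.of fun i j : Fin (m - 1) =>
      ((k * ((i : ℕ) + 1) + k * ((j : ℕ) + 1)).choose (k * ((i : ℕ) + 1)) : ℤ) with hX
  have hcast : ((Matrix.det X : ℤ) : ZMod p) = (X.map (Int.cast : ℤ → ZMod p)).det := by
    have h := RingHom.map_det (Int.castRingHom (ZMod p)) X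
    rw [RingHom.mapMatrix_apply] at h
    exact h
  change (X.map (Int.cast : ℤ → ZMod p)).det = _
  -- basic entry bounds
  have hbound : ∀ i : Fin (m - 1), k * ((i : ℕ) + 1) ≤ q - 1 - k := by
    intro i
    have h1 : (i : ℕ) + 1 ≤ m - 1 := by have := i.isLt; omega
    have h2 : k * ((i : ℕ) + 1) ≤ k * (m - 1) := Nat.mul_le_mul_left k h1
    have h3 : k * (m - 1) + k = q - 1 := by
      have h4 : k * (m - 1) + k = k * ((m - 1) + 1) := by ring
      rw [h4, show (m - 1) + 1 = m from by omega, hkm]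
    omega
  -- zero below the antidiagonal
  have hzero : ∀ i j : Fin (m - 1), m - 1 ≤ (i : ℕ) + (j : ℕ) →
      (X.map (Int.cast : ℤ → ZMod p)) i j = 0 := by
    intro i j hij
    have hent : (X.map (Int.cast : ℤ → ZMod p)) i j =
        (((k * ((i : ℕ) + 1) + k * ((j : ℕ) + 1)).choose (k * ((i : ℕ) + 1)) : ℕ) : ZMod p) := by
      simp [hX, Matrix.map_apply]
    rw [hent, ZMod.natCast_eq_zero_iff]
    have ha := hbound i
    have hb := hbound j
    have hab : q ≤ k * ((i : ℕ) + 1) + k * ((j : ℕ) + 1) := by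
      have h4 : m + 1 ≤ (i : ℕ) + 1 + ((j : ℕ) + 1) := by omega
      have h5 : k * (m + 1) ≤ k * ((i : ℕ) + 1 + ((j : ℕ) + 1)) := Nat.mul_le_mul_left k h4
      have h6 : k * ((i : ℕ) + 1 + ((j : ℕ) + 1)) = k * ((i : ℕ) + 1) + k * ((j : ℕ) + 1) := by
        ring
      have h7 : k * (m + 1) = (q - 1) + k := by
        rw [show k * (m + 1) = k * m + k from by ring, hkm]
      omega
    have := aux_dvd_choose p n (k * ((i : ℕ) + 1)) (k * ((j : ℕ) + 1)) hp hn
      (by rw [← hq]; omega) (by rw [← hq]; omega) (by rw [← hq]; omega)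
    exact this
  rw [aux_det_antidiag (m - 1) _ hzero]
  -- antidiagonal entries
  have hdiag : ∀ i : Fin (m - 1), (X.map (Int.cast : ℤ → ZMod p)) i i.rev =
      (-1 : ZMod p) ^ (k * ((i : ℕ) + 1)) := by
    intro i
    have hrev : ((i.rev : Fin (m - 1)) : ℕ) = m - 1 - ((i : ℕ) + 1) := by
      rw [Fin.val_rev]
    have hsum : (i : ℕ) + 1 + (((i.rev : Fin (m - 1)) : ℕ) + 1) = m := by
      have := i.isLt; rw [hrev]; omega
    have hent : (X.map (Int.cast : ℤ → ZMod p)) i i.rev =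
        (((k * ((i : ℕ) + 1) + k * (((i.rev : Fin (m - 1)) : ℕ) + 1)).choose
          (k * ((i : ℕ) + 1)) : ℕ) : ZMod p) := by
      simp [hX, Matrix.map_apply]
    rw [hent]
    have harg : k * ((i : ℕ) + 1) + k * (((i.rev : Fin (m - 1)) : ℕ) + 1) = q - 1 := by
      have h8 : k * ((i : ℕ) + 1) + k * (((i.rev : Fin (m - 1)) : ℕ) + 1) =
          k * ((i : ℕ) + 1 + (((i.rev : Fin (m - 1)) : ℕ) + 1)) := by ring
      rw [h8, hsum, hkm]
    rw [harg, hq]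
    exact aux_choose_pred p n hp _ (by rw [← hq]; have := hbound i; omega)
  rw [Finset.prod_congr rfl (fun i _ => hdiag i)]
  rw [Finset.prod_pow_eq_pow_sum]
  -- compute the sum of exponents
  have hsum2 : ∑ i : Fin (m - 1), k * ((i : ℕ) + 1) = k * (m * (m - 1) / 2) := by
    rw [Fin.sum_univ_eq_sum_range (fun i => k * (i + 1)) (m - 1), ← Finset.mul_sum]
    congr 1
    have h2 : ∑ i ∈ Finset.range ((m - 1) + 1), i = ∑ i ∈ Finset.range (m - 1), (i + 1) := by
      rw [Finset.sum_range_succ' (fun i => i) (m - 1)]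
      simp
    rw [← h2, show (m - 1) + 1 = m from by omega, Finset.sum_range_id]
  rw [hsum2]
  rw [aux_exp k m hk0 hm1]
  rw [show (m - 1) * ((m - 1) - 1) / 2 = (m - 1) * (m - 2) / 2 from by
    rw [show (m - 1) - 1 = m - 2 from by omega]]
  rw [pow_add, pow_add]
  rw [show ((-1 : ZMod p)) ^ (2 * (m - 1)) = 1 from by rw [pow_mul, neg_one_sq, one_pow],
    mul_one, pow_mul]
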